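/- arXiv:2512.01809 — 2 statements merged into one kernel-verified Lean document; each statement's English description precedes it below -/
import Mathlib

section
/- In the isotropic linear model a = Θ* o + η with Σ_o = I, Σ_η = η² I, Σ_z = I, Θ* = diag(s_i), and w = c₁ a + c₂ z, the solution of the ridge problem with penalty λ on B (minimizing E‖B o + C w − a‖² + λ‖B‖_F²) is B = diag(c₂² s_i / (λ c₁² s_i² + (1+λ)(c₁² η² + c₂²))) and C = diag((1/c₁)(1 − (1+λ)c₂² / (λ c₁² s_i² + (1+λ)(c₁² η² + c₂²)))). -/
open Matrix

/-- Isotropic ridge-on-`B` solution: under `Σ_o = I`, `Σ_η = η² I`, `Σ_z = I`,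
`Θ* = diag(s_i)`, `w = c₁ a + c₂ z`, the solution of the normal equations of the ridge
problem with penalty `λ` on `B` is
`B = diag(c₂² s_i / D_i)` and `C = diag((1/c₁)(1 − (1+λ)c₂²/D_i))`,
where `D_i = λ c₁² s_i² + (1+λ)(c₁² η² + c₂²)`. -/
theorem ridge_on_B_isotropic_solution {d : ℕ}
    (s : Fin d → ℝ) (hs : ∀ i, s i ≠ 0)
    (c₁ c₂ η lam : ℝ) (hc₁ : c₁ ≠ 0) (hlam : 0 ≤ lam)
    (hden : ∀ i, lam * c₁ ^ 2 * s i ^ 2 + (1 + lam) * (c₁ ^ 2 * η ^ 2 + c₂ ^ 2) ≠ 0)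
    (S11 S12 S21 S22 Sa1 Sa2 : Matrix (Fin d) (Fin d) ℝ)
    (hS11 : S11 = 1)
    (hS12 : S12 = c₁ • (Matrix.diagonal s)ᵀ)
    (hS21 : S21 = S12ᵀ)
    (hS22 : S22 = c₁ ^ 2 • (Matrix.diagonal s * (Matrix.diagonal s)ᵀ + η ^ 2 • 1)
      + c₂ ^ 2 • 1)
    (hSa1 : Sa1 = Matrix.diagonal s)
    (hSa2 : Sa2 = c₁ • (Matrix.diagonal s * (Matrix.diagonal s)ᵀ + η ^ 2 • 1))
    (B C : Matrix (Fin d) (Fin d) ℝ)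
    (h1 : B * (S11 + lam • 1) + C * S21 = Sa1)
    (h2 : B * S12 + C * S22 = Sa2) :
    B = Matrix.diagonal (fun i =>
        c₂ ^ 2 * s i / (lam * c₁ ^ 2 * s i ^ 2 + (1 + lam) * (c₁ ^ 2 * η ^ 2 + c₂ ^ 2))) ∧
    C = Matrix.diagonal (fun i =>
        (1 / c₁) * (1 - (1 + lam) * c₂ ^ 2 /
          (lam * c₁ ^ 2 * s i ^ 2 + (1 + lam) * (c₁ ^ 2 * η ^ 2 + c₂ ^ 2)))) := by
  subst hS11 hS12 hS21 hS22 hSa1 hSa2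
  have key : ∀ i j,
      B i j * (1 + lam) + C i j * (c₁ * s j)
        = (if i = j then s i else 0) ∧
      B i j * (c₁ * s j) + C i j * (c₁ ^ 2 * (s j * s j + η ^ 2) + c₂ ^ 2)
        = (if i = j then c₁ * (s i * s i + η ^ 2) else 0) := by
    intro i j
    have e1 := congrFun (congrFun h1 i) j
    have e2 := congrFun (congrFun h2 i) j
    simp only [Matrix.diagonal_transpose, Matrix.transpose_smul,
      Matrix.diagonal_mul_diagonal, Matrix.mul_add, Matrix.mul_one,
      Matrix.mul_smul, smul_add, Matrix.mul_diagonal,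
      Matrix.add_apply, Matrix.smul_apply, smul_eq_mul, Matrix.one_apply,
      Matrix.diagonal_apply] at e1 e2
    constructor <;> split_ifs at e1 e2 ⊢ <;>
      [linear_combination e1; linear_combination e1;
       linear_combination e2; linear_combination e2]
  constructor <;> ext i j <;>
    obtain ⟨e1, e2⟩ := key i j <;>
    rw [Matrix.diagonal_apply] <;>
    by_cases hij : i = j
  · subst hij
    rw [if_pos rfl] at e1 e2 ⊢
    have hD := hden i
    rw [eq_div_iff hD]
    linear_combination (c₁ ^ 2 * (s i * s i + η ^ 2) + c₂ ^ 2) * e1 - (c₁ * s i) * e2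
  · rw [if_neg hij] at e1 e2 ⊢
    have hD := hden j
    have hdet : (1 + lam) * (c₁ ^ 2 * (s j * s j + η ^ 2) + c₂ ^ 2)
        - (c₁ * s j) * (c₁ * s j) ≠ 0 := fun h => hD (by linear_combination h)
    have hz : B i j * ((1 + lam) * (c₁ ^ 2 * (s j * s j + η ^ 2) + c₂ ^ 2)
        - (c₁ * s j) * (c₁ * s j)) = 0 := by
      linear_combination (c₁ ^ 2 * (s j * s j + η ^ 2) + c₂ ^ 2) * e1 - (c₁ * s j) * e2
    exact (mul_eq_zero.mp hz).resolve_right hdet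
  · subst hij
    rw [if_pos rfl] at e1 e2 ⊢
    have hD := hden i
    have hD' : c₁ ^ 2 * lam * s i ^ 2 + (1 + lam) * (c₁ ^ 2 * η ^ 2 + c₂ ^ 2) ≠ 0 := by
      rwa [mul_comm (c₁ ^ 2) lam]
    field_simp
    linear_combination (c₁ * (1 + lam)) * e2 - (c₁ ^ 2 * s i) * e1
  · rw [if_neg hij] at e1 e2 ⊢
    have hD := hden j
    have hdet : (1 + lam) * (c₁ ^ 2 * (s j * s j + η ^ 2) + c₂ ^ 2)
        - (c₁ * s j) * (c₁ * s j) ≠ 0 := fun h => hD (by linear_combination h)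
    have hz : C i j * ((1 + lam) * (c₁ ^ 2 * (s j * s j + η ^ 2) + c₂ ^ 2)
        - (c₁ * s j) * (c₁ * s j)) = 0 := by
      linear_combination (1 + lam) * e2 - (c₁ * s j) * e1
    exact (mul_eq_zero.mp hz).resolve_right hdet
end

section
/- In the isotropic linear model with ridge penalty λ on C (minimizing E‖B o + C w − a‖² + λ‖C‖_F²), the solution is B = diag((c₂² + λ) s_i / (c₁² η² + c₂² + λ)) and C = (c₁ η² / (c₁² η² + c₂² + λ)) I. -/
open Matrix

/-- Isotropic ridge-on-`C` solution: with penalty `λ` on `C`, the solution of the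
normal equations is `B = diag((c₂² + λ) s_i / (c₁² η² + c₂² + λ))` and
`C = (c₁ η² / (c₁² η² + c₂² + λ)) I`. -/
theorem ridge_on_C_isotropic_solution {d : ℕ}
    (s : Fin d → ℝ) (hs : ∀ i, s i ≠ 0)
    (c₁ c₂ η lam : ℝ) (hc₁ : c₁ ≠ 0) (hlam : 0 ≤ lam)
    (hden : c₁ ^ 2 * η ^ 2 + c₂ ^ 2 + lam ≠ 0)
    (S11 S12 S21 S22 Sa1 Sa2 : Matrix (Fin d) (Fin d) ℝ)
    (hS11 : S11 = 1)
    (hS12 : S12 = c₁ • (Matrix.diagonal s)ᵀ)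
    (hS21 : S21 = c₁ • Matrix.diagonal s)
    (hS22 : S22 = c₁ ^ 2 • (Matrix.diagonal s ^ 2 + η ^ 2 • 1) + c₂ ^ 2 • 1)
    (hSa1 : Sa1 = Matrix.diagonal s)
    (hSa2 : Sa2 = c₁ • (Matrix.diagonal s ^ 2 + η ^ 2 • 1))
    (B C : Matrix (Fin d) (Fin d) ℝ)
    (h1 : B * S11 + C * S21 = Sa1)
    (h2 : B * S12 + C * (S22 + lam • 1) = Sa2) :
    B = Matrix.diagonal (fun i =>
        (c₂ ^ 2 + lam) * s i / (c₁ ^ 2 * η ^ 2 + c₂ ^ 2 + lam)) ∧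
    C = (c₁ * η ^ 2 / (c₁ ^ 2 * η ^ 2 + c₂ ^ 2 + lam)) • (1 : Matrix (Fin d) (Fin d) ℝ) := by
  subst hS11 hS12 hS21 hS22 hSa1 hSa2
  have hD2 : (Matrix.diagonal s) ^ 2 + η ^ 2 • (1 : Matrix (Fin d) (Fin d) ℝ)
      = Matrix.diagonal (fun k => s k ^ 2 + η ^ 2) := by
    ext i j
    by_cases h : i = j <;>
      simp [sq, Matrix.mul_apply, Matrix.diagonal_apply, Matrix.one_apply, h,
        Finset.sum_ite_eq, mul_comm]
  have hsimp : ∀ i j : Fin d,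
      B i j + C i j * (c₁ * s j) = (Matrix.diagonal s) i j ∧
      B i j * (c₁ * s j) + C i j * (c₁ ^ 2 * (s j ^ 2 + η ^ 2) + c₂ ^ 2 + lam)
        = c₁ * ((Matrix.diagonal (fun k => s k ^ 2 + η ^ 2)) i j) := by
    intro i j
    have e1 := congrFun (congrFun h1 i) j
    have e2 := congrFun (congrFun h2 i) j
    rw [hD2, Matrix.diagonal_transpose] at e2
    simp only [mul_one, Matrix.add_apply, Matrix.mul_smul, Matrix.smul_apply,
      Matrix.mul_diagonal, smul_eq_mul] at e1 e2
    constructor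
    · rw [← e1]; ring
    · rw [← e2]
      have : (c₁ ^ 2 • Matrix.diagonal (fun k => s k ^ 2 + η ^ 2)
          + c₂ ^ 2 • (1 : Matrix (Fin d) (Fin d) ℝ) + lam • 1)
          = Matrix.diagonal (fun k => c₁ ^ 2 * (s k ^ 2 + η ^ 2) + c₂ ^ 2 + lam) := by
        ext a b
        by_cases h : a = b <;> simp [Matrix.diagonal_apply, Matrix.one_apply, h]
      rw [this, Matrix.mul_diagonal]
      ring
  have hC : C = (c₁ * η ^ 2 / (c₁ ^ 2 * η ^ 2 + c₂ ^ 2 + lam)) •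
      (1 : Matrix (Fin d) (Fin d) ℝ) := by
    ext i j
    obtain ⟨e1, e2⟩ := hsimp i j
    have key : C i j * (c₁ ^ 2 * η ^ 2 + c₂ ^ 2 + lam)
        = c₁ * ((Matrix.diagonal (fun k => (η:ℝ) ^ 2)) i j) := by
      by_cases h : i = j
      · subst h
        simp only [Matrix.diagonal_apply_eq] at e1 e2 ⊢
        linear_combination e2 - c₁ * s i * e1
      · simp only [Matrix.diagonal_apply_ne _ h] at e1 e2 ⊢
        linear_combination e2 - c₁ * s j * e1
    by_cases h : i = j
    · subst h
      simp only [Matrix.diagonal_apply_eq] at key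
      simp only [Matrix.smul_apply, Matrix.one_apply_eq, smul_eq_mul, mul_one]
      field_simp
      linarith [key]
    · simp only [Matrix.diagonal_apply_ne _ h, mul_zero] at key
      simp only [Matrix.smul_apply, Matrix.one_apply_ne h, smul_eq_mul, mul_zero]
      exact (mul_eq_zero.mp key).resolve_right hden
  refine ⟨?_, hC⟩
  ext i j
  obtain ⟨e1, _⟩ := hsimp i j
  have hCij := congrFun (congrFun hC i) j
  simp only [Matrix.smul_apply, Matrix.one_apply, smul_eq_mul] at hCij
  by_cases h : i = j
  · subst h
    simp only [if_true, mul_one, reduceIte] at hCij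
    rw [hCij, Matrix.diagonal_apply_eq] at e1
    rw [Matrix.diagonal_apply_eq]
    field_simp at e1 ⊢
    linarith [e1]
  · simp only [if_neg h, mul_zero] at hCij
    rw [hCij, zero_mul, add_zero, Matrix.diagonal_apply_ne _ h] at e1
    rw [Matrix.diagonal_apply_ne _ h]
    exact e1
end
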